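/- Let L and the points a_{p,q}, b_{p,q}, c_p = (p, 0) ∈ ℕ × s be as above. For p, q ∈ ℕ define the open set U_{p,q} = {h ∈ C(L,2) : h(a_{p,q}) = h(b_{p,q}) = 1, h(∞) = h(c_p) = 0} in the compact-open topology. Then for every compact subset K of C(L,2), the set {(p,q) ∈ ℕ × ℕ : U_{p,q} ∩ K ≠ ∅} is finite. -/

import Mathlib

open Topology Set

/-- The countably infinite metric fan `M = (ω × ℕ) ∪ {∞}`: `none` is the point `∞`,
`some (α, n)` is the point `(α, n)` of `ω × {n}`. -/
def FanM : Type := Option (ℕ × ℕ)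

/-- The fan topology on `M`: points of `ω × ℕ` are isolated and the basic neighborhoods of
`∞` are `U(N) = {(α, n) : n ≥ N} ∪ {∞}`. -/
instance : TopologicalSpace FanM where
  IsOpen S := (none ∈ S) → ∃ N : ℕ, ∀ α n : ℕ, N ≤ n → (Option.some (α, n) : FanM) ∈ S
  isOpen_univ := fun _ => ⟨0, fun _ _ _ => trivial⟩
  isOpen_inter := by
    intro s t hs ht hmem
    obtain ⟨Ns, hNs⟩ := hs hmem.1
    obtain ⟨Nt, hNt⟩ := ht hmem.2
    exact ⟨max Ns Nt, fun α n hn =>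
      ⟨hNs α n (le_trans (le_max_left _ _) hn), hNt α n (le_trans (le_max_right _ _) hn)⟩⟩
  isOpen_sUnion := by
    intro S hS hmem
    obtain ⟨t, htS, hnt⟩ := hmem
    obtain ⟨N, hN⟩ := hS t htS hnt
    exact ⟨N, fun α n hn => ⟨t, htS, hN α n hn⟩⟩

/-- The convergent sequence `s = {0} ∪ {1/n : n ∈ ℕ, n ≥ 1} ⊆ ℝ`. -/
def sSet : Set ℝ := {x | x = 0 ∨ ∃ n : ℕ, 0 < n ∧ x = 1 / (n : ℝ)}

/-- The space `L = M ⊔ (ℕ × s)`: the topological sum of the metric fan and countably many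
copies of the convergent sequence. -/
def Lspace : Type := FanM ⊕ (ℕ × ↥sSet)

instance : TopologicalSpace Lspace := instTopologicalSpaceSum

/-- The point `∞ ∈ M ⊆ L`. -/
def infPt : Lspace := Sum.inl none

/-- The point `a_{p,q} = (p, p+q) ∈ M ⊆ L`. -/
def aPt (p q : ℕ) : Lspace := Sum.inl (Option.some (p, p + q))

lemma one_div_mem_sSet (m : ℕ) : (1 / (m : ℝ)) ∈ sSet := by
  rcases Nat.eq_zero_or_pos m with h | h
  · exact Or.inl (by simp [h])
  · exact Or.inr ⟨m, h, rfl⟩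

/-- The point `b_{p,q} = (p, 1/(p+q)) ∈ ℕ × s ⊆ L`. -/
noncomputable def bPt (p q : ℕ) : Lspace :=
  Sum.inr (p, ⟨1 / ((p + q : ℕ) : ℝ), one_div_mem_sSet _⟩)

/-- The point `c_p = (p, 0) ∈ ℕ × s ⊆ L`. -/
def cPt (p : ℕ) : Lspace := Sum.inr (p, ⟨0, Or.inl rfl⟩)

/-- The set `A = {f_{p,q} : p, q ∈ ℕ, p, q ≥ 1} ⊆ C(L, 2)`, where `f_{p,q}` is the continuous
function with value `1` exactly at the two points `a_{p,q}` and `b_{p,q}`. -/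
def setA : Set C(Lspace, ZMod 2) :=
  {f | ∃ p q : ℕ, 0 < p ∧ 0 < q ∧ ∀ x : Lspace, f x = 1 ↔ (x = aPt p q ∨ x = bPt p q)}

/-- The open set `U_{p,q} = {h ∈ C(L,2) : h(a_{p,q}) = h(b_{p,q}) = 1, h(∞) = h(c_p) = 0}`. -/
def Upq (p q : ℕ) : Set C(Lspace, ZMod 2) :=
  {h | h (aPt p q) = 1 ∧ h (bPt p q) = 1 ∧ h infPt = 0 ∧ h (cPt p) = 0}

open Filter

lemma fanM_isOpen_iff (S : Set FanM) :
    IsOpen S ↔ ((none ∈ S) → ∃ N : ℕ, ∀ α n : ℕ, N ≤ n → (Option.some (α, n) : FanM) ∈ S) :=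
  Iff.rfl

lemma tendsto_aPt (P Q : ℕ → ℕ) (h : Tendsto (fun k => P k + Q k) atTop atTop) :
    Tendsto (fun k => aPt (P k) (Q k)) atTop (𝓝 infPt) := by
  rw [tendsto_nhds]
  intro U hU hmem
  have h1 : IsOpen (Sum.inl ⁻¹' U : Set FanM) := (isOpen_sum_iff.1 hU).1
  obtain ⟨N, hN⟩ := (fanM_isOpen_iff _).1 h1 hmem
  filter_upwards [h.eventually_ge_atTop N] with k hk
  exact hN (P k) (P k + Q k) hk

lemma tendsto_bPt (p : ℕ) : Tendsto (fun q => bPt p q) atTop (𝓝 (cPt p)) := by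
  have hval : Tendsto (fun q : ℕ => 1 / (((p + q : ℕ)) : ℝ)) atTop (𝓝 0) := by
    have := (tendsto_one_div_atTop_nhds_zero_nat (𝕜 := ℝ)).comp (tendsto_add_atTop_nat p)
    exact this.congr fun q => by simp [Nat.add_comm]
  have h2 : Tendsto (fun q : ℕ => (⟨1 / (((p + q : ℕ)) : ℝ), one_div_mem_sSet _⟩ : ↥sSet))
      atTop (𝓝 ⟨0, Or.inl rfl⟩) := tendsto_subtype_rng.2 hval
  exact (continuous_inr.tendsto _).comp (tendsto_const_nhds.prodMk_nhds h2)

lemma zmod2_cases : ∀ v : ZMod 2, v = 0 ∨ v = 1 := by decide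

lemma key (K : Set C(Lspace, ZMod 2)) (hK : IsCompact K) (g : ℕ → Lspace) (x : Lspace)
    (hg : Tendsto g atTop (𝓝 x)) :
    ∃ N : ℕ, ∀ h ∈ K, ∀ k, N ≤ k → h (g k) = h x := by
  classical
  set C : ℕ → Set Lspace := fun N => insert x (Set.range fun k => g (k + N)) with hCdef
  have hCcomp : ∀ N, IsCompact (C N) := fun N =>
    (hg.comp (tendsto_add_atTop_nat N)).isCompact_insert_range
  set W : ℕ → Set C(Lspace, ZMod 2) := fun N =>
    {h | Set.MapsTo h (C N) {0}} ∪ {h | Set.MapsTo h (C N) {1}} with hWdef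
  have hWopen : ∀ N, IsOpen (W N) :=
    fun N => (ContinuousMap.isOpen_setOf_mapsTo (hCcomp N) (isOpen_discrete _)).union
      (ContinuousMap.isOpen_setOf_mapsTo (hCcomp N) (isOpen_discrete _))
  have hWmono : ∀ {i j : ℕ}, i ≤ j → W i ⊆ W j := by
    intro i j hij
    have hC : C j ⊆ C i := by
      rintro y (rfl | ⟨k, rfl⟩)
      · exact Set.mem_insert _ _
      · refine Set.mem_insert_of_mem _ ⟨k + (j - i), ?_⟩
        show g (k + (j - i) + i) = g (k + j)
        rw [Nat.add_assoc, Nat.sub_add_cancel hij]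
    rintro h (hh | hh)
    · exact Or.inl (hh.mono_left hC)
    · exact Or.inr (hh.mono_left hC)
  have hcover : K ⊆ ⋃ N, W N := by
    intro h hh
    have hopen : IsOpen (⇑h ⁻¹' {h x}) := (isOpen_discrete _).preimage h.continuous
    have hev : ∀ᶠ k in atTop, g k ∈ ⇑h ⁻¹' {h x} :=
      hg (hopen.mem_nhds (Set.mem_preimage.2 rfl))
    obtain ⟨N, hN⟩ := eventually_atTop.1 hev
    have hmaps : Set.MapsTo h (C N) {h x} := by
      rintro y (rfl | ⟨k, rfl⟩)
      · rfl
      · exact hN _ (Nat.le_add_left N k)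
    refine Set.mem_iUnion.2 ⟨N, ?_⟩
    rcases zmod2_cases (h x) with hx | hx
    · exact Or.inl (hx ▸ hmaps)
    · exact Or.inr (hx ▸ hmaps)
  obtain ⟨t, ht⟩ := hK.elim_finite_subcover W hWopen hcover
  refine ⟨t.sup id, fun h hh k hk => ?_⟩
  obtain ⟨i, hi, hhi⟩ := Set.mem_iUnion₂.1 (ht hh)
  have hW : h ∈ W (t.sup id) := hWmono (Finset.le_sup (f := id) hi) hhi
  have hxC : x ∈ C (t.sup id) := Set.mem_insert _ _
  have hgC : g k ∈ C (t.sup id) := Set.mem_insert_of_mem _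
    ⟨k - t.sup id, show g (k - t.sup id + t.sup id) = g k by rw [Nat.sub_add_cancel hk]⟩
  rcases hW with hW | hW
  · rw [hW hgC, hW hxC]
  · rw [hW hgC, hW hxC]

theorem statement8 (K : Set C(Lspace, ZMod 2)) (hK : IsCompact K) :
    {pq : ℕ × ℕ | 0 < pq.1 ∧ 0 < pq.2 ∧ (Upq pq.1 pq.2 ∩ K).Nonempty}.Finite := by
  classical
  have claimB : ∀ p : ℕ, {q : ℕ | (Upq p q ∩ K).Nonempty}.Finite := by
    intro p
    obtain ⟨N, hN⟩ := key K hK (fun q => bPt p q) (cPt p) (tendsto_bPt p)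
    refine (Set.finite_Iio N).subset fun q hq => ?_
    by_contra hge
    obtain ⟨h, hU, hKm⟩ := hq
    have := hN h hKm q (le_of_not_gt hge)
    rw [hU.2.1, hU.2.2.2] at this
    exact one_ne_zero this
  have claimA : {p : ℕ | ∃ q, (Upq p q ∩ K).Nonempty}.Finite := by
    by_contra hfin
    have hinf : {p : ℕ | ∃ q, (Upq p q ∩ K).Nonempty}.Infinite := hfin
    have H : ∀ p : ↥{p : ℕ | ∃ q, (Upq p q ∩ K).Nonempty},
        ∃ q h, h ∈ Upq (p : ℕ) q ∧ h ∈ K := by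
      rintro ⟨p, q, h, h1, h2⟩
      exact ⟨q, h, h1, h2⟩
    choose Q F hF1 hF2 using H
    let e := hinf.natEmbedding
    have hinj : Function.Injective (fun k => ((e k : _) : ℕ)) :=
      fun a b hab => e.injective (Subtype.ext hab)
    have hten : Tendsto (fun k => ((e k : _) : ℕ) + Q (e k)) atTop atTop := by
      refine tendsto_atTop_mono (fun k => Nat.le_add_right _ _) ?_
      have := hinj.tendsto_cofinite
      rwa [Nat.cofinite_eq_atTop] at this
    obtain ⟨N, hN⟩ := key K hK (fun k => aPt (e k) (Q (e k))) infPt (tendsto_aPt _ _ hten)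
    have := hN (F (e N)) (hF2 _) N le_rfl
    rw [(hF1 (e N)).1, (hF1 (e N)).2.2.1] at this
    exact one_ne_zero this
  refine Set.Finite.subset (Set.Finite.biUnion claimA
    (fun p _ => (claimB p).image (fun q => (p, q)))) ?_
  rintro ⟨p, q⟩ ⟨-, -, hne⟩
  exact Set.mem_biUnion ⟨q, hne⟩ ⟨q, hne, rfl⟩
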